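/- arXiv:1108.1066 — 5 statements merged into one kernel-verified Lean document; each statement's English description precedes it below -/
import Mathlib

section
/- Let e : ℝ → ℝⁿ and Δ : ℝ → ℝᵐ be differentiable, let K, L be n×n real matrices, and let F : ℝ → Matrix (Fin n) (Fin m) ℝ be any function of time. Suppose that for all t: ė(t) = −K·e(t) + F(t)·Δ(t) and Δ̇(t) = −F(t)ᵀ·[(L·K + I)·e(t) + L·ė(t)]. Then the function V(t) = ½‖e(t)‖² + ½‖Δ(t)‖² is differentiable with V̇(t) = −⟨e(t), K·e(t)⟩ − ⟨Δ(t), G(t)·Δ(t)⟩ for all t, where G(t) = F(t)ᵀ·Lᵀ·F(t). -/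
open Matrix
open scoped InnerProductSpace

private lemma inner_eq_dot {k : ℕ} (x y : EuclideanSpace ℝ (Fin k)) :
    ⟪x, y⟫_ℝ = dotProduct (x : Fin k → ℝ) y := by
  simp [PiLp.inner_apply, dotProduct, mul_comm]

private lemma dot_mulVec {k l : ℕ} (A : Matrix (Fin k) (Fin l) ℝ)
    (x : Fin k → ℝ) (y : Fin l → ℝ) :
    dotProduct x (A.mulVec y) = dotProduct (Aᵀ.mulVec x) y := by
  rw [dotProduct_mulVec, Matrix.mulVec_transpose, dotProduct_comm]

/-- If `ė = -K e + F(t) Δ` and `Δ̇ = -F(t)ᵀ[(LK + I) e + L ė]`, then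
`V(t) = ½‖e(t)‖² + ½‖Δ(t)‖²` is differentiable with
`V̇ = -⟪e, K e⟫ - ⟪Δ, G(t) Δ⟫` where `G(t) = F(t)ᵀ Lᵀ F(t)`. -/
theorem lyapunov_derivative_proposed_law {n m : ℕ}
    (K L : Matrix (Fin n) (Fin n) ℝ)
    (F : ℝ → Matrix (Fin n) (Fin m) ℝ)
    (e e' : ℝ → EuclideanSpace ℝ (Fin n))
    (Δ Δ' : ℝ → EuclideanSpace ℝ (Fin m))
    (he : ∀ t, HasDerivAt e (e' t) t)
    (hΔ : ∀ t, HasDerivAt Δ (Δ' t) t)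
    (hode : ∀ t, e' t = -(K.mulVec (e t)) + (F t).mulVec (Δ t))
    (hadapt : ∀ t, Δ' t =
      -((F t)ᵀ.mulVec ((L * K + 1).mulVec (e t) + L.mulVec (e' t)))) :
    ∀ t, HasDerivAt (fun s => (1 / 2 : ℝ) * ‖e s‖ ^ 2 + (1 / 2 : ℝ) * ‖Δ s‖ ^ 2)
      (-⟪e t, WithLp.toLp 2 (K.mulVec (e t))⟫_ℝ - ⟪Δ t, WithLp.toLp 2 (((F t)ᵀ * Lᵀ * F t).mulVec (Δ t))⟫_ℝ) t := by
  intro t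
  have h1 : HasDerivAt (fun s => (1 / 2 : ℝ) * ‖e s‖ ^ 2)
      ((1 / 2 : ℝ) * (⟪e t, e' t⟫_ℝ + ⟪e' t, e t⟫_ℝ)) t := by
    have h := ((he t).inner ℝ (he t)).const_mul (1 / 2 : ℝ)
    have hfe : (fun s => (1 / 2 : ℝ) * ‖e s‖ ^ 2)
        = fun s => (1 / 2 : ℝ) * ⟪e s, e s⟫_ℝ := by
      funext s; rw [real_inner_self_eq_norm_sq]
    rw [hfe]; exact h
  have h2 : HasDerivAt (fun s => (1 / 2 : ℝ) * ‖Δ s‖ ^ 2)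
      ((1 / 2 : ℝ) * (⟪Δ t, Δ' t⟫_ℝ + ⟪Δ' t, Δ t⟫_ℝ)) t := by
    have h := ((hΔ t).inner ℝ (hΔ t)).const_mul (1 / 2 : ℝ)
    have hfΔ : (fun s => (1 / 2 : ℝ) * ‖Δ s‖ ^ 2)
        = fun s => (1 / 2 : ℝ) * ⟪Δ s, Δ s⟫_ℝ := by
      funext s; rw [real_inner_self_eq_norm_sq]
    rw [hfΔ]; exact h
  have key : (1 / 2 : ℝ) * (⟪e t, e' t⟫_ℝ + ⟪e' t, e t⟫_ℝ)
      + (1 / 2 : ℝ) * (⟪Δ t, Δ' t⟫_ℝ + ⟪Δ' t, Δ t⟫_ℝ)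
      = -⟪e t, WithLp.toLp 2 (K.mulVec (e t))⟫_ℝ - ⟪Δ t, WithLp.toLp 2 (((F t)ᵀ * Lᵀ * F t).mulVec (Δ t))⟫_ℝ := by
    rw [real_inner_comm (e t) (e' t), real_inner_comm (Δ t) (Δ' t)]
    have heq : (1 / 2 : ℝ) * (⟪e t, e' t⟫_ℝ + ⟪e t, e' t⟫_ℝ)
        + (1 / 2 : ℝ) * (⟪Δ t, Δ' t⟫_ℝ + ⟪Δ t, Δ' t⟫_ℝ)
        = ⟪e t, e' t⟫_ℝ + ⟪Δ t, Δ' t⟫_ℝ := by ring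
    rw [heq]
    simp only [inner_eq_dot, hadapt t, hode t, WithLp.ofLp_toLp]
    simp only [Matrix.mulVec_add, Matrix.mulVec_neg, Matrix.add_mulVec,
      Matrix.neg_mulVec, Matrix.mulVec_mulVec, Matrix.one_mulVec,
      dotProduct_add, dotProduct_neg, dot_mulVec,
      Matrix.transpose_transpose, Matrix.transpose_mul]
    have hcross : ((F t)ᵀ.mulVec (e t)) ⬝ᵥ (Δ t : Fin m → ℝ)
        = (e t : Fin n → ℝ) ⬝ᵥ ((F t).mulVec (Δ t)) :=
      (dot_mulVec (F t) (e t) (Δ t)).symm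
    have hquad : ((F t)ᵀ * Lᵀ * F t) *ᵥ (Δ t : Fin m → ℝ) ⬝ᵥ (Δ t : Fin m → ℝ)
        = ((F t)ᵀ * (L * F t)) *ᵥ (Δ t : Fin m → ℝ) ⬝ᵥ (Δ t : Fin m → ℝ) := by
      have key : ∀ (M : Matrix (Fin n) (Fin n) ℝ),
          ((F t)ᵀ * M * F t) *ᵥ (Δ t : Fin m → ℝ) ⬝ᵥ (Δ t : Fin m → ℝ)
          = ((F t) *ᵥ (Δ t : Fin m → ℝ)) ⬝ᵥ (M *ᵥ ((F t) *ᵥ (Δ t : Fin m → ℝ))) := by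
        intro M
        rw [← Matrix.mulVec_mulVec, ← Matrix.mulVec_mulVec, dotProduct_comm,
          dotProduct_mulVec, Matrix.vecMul_transpose]
      rw [← Matrix.mul_assoc, key, key, dotProduct_mulVec, Matrix.vecMul_transpose,
        dotProduct_comm]
    rw [hcross, hquad, dotProduct_comm (e t : Fin n → ℝ) ((F t).mulVec (Δ t))]
    ring
  rw [← key]
  exact h1.add h2
end

section
/- Let e : ℝ → ℝⁿ and Δ : ℝ → ℝᵐ be differentiable, K, L n×n real matrices, F : ℝ → Matrix (Fin n) (Fin m) ℝ, and suppose for all t ≥ 0: ė(t) = −K·e(t) + F(t)·Δ(t) and Δ̇(t) = −F(t)ᵀ·[(L·K + I)·e(t) + L·ė(t)]. Assume there exist constants k > 0 and μ > 0 such that ⟨v, K·v⟩ ≥ k‖v‖² for all v ∈ ℝⁿ and ⟨w, F(t)ᵀ·Lᵀ·F(t)·w⟩ ≥ μ‖w‖² for all w ∈ ℝᵐ and all t ≥ 0. Then, with c = min(k, μ), ‖e(t)‖² + ‖Δ(t)‖² ≤ (‖e(0)‖² + ‖Δ(0)‖²)·exp(−2ct) for all t ≥ 0; in particular e(t) → 0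 and Δ(t) → 0 as t → ∞. -/
open Matrix Filter
open scoped InnerProductSpace

private lemma mulVec_algebra {n m : ℕ} (K L : Matrix (Fin n) (Fin n) ℝ)
    (Fm : Matrix (Fin n) (Fin m) ℝ) (em : Fin n → ℝ) (dm : Fin m → ℝ) :
    em ⬝ᵥ (-(K.mulVec em) + Fm.mulVec dm)
      + dm ⬝ᵥ (-(Fmᵀ.mulVec ((L * K + 1).mulVec em + L.mulVec (-(K.mulVec em) + Fm.mulVec dm))))
    = -(em ⬝ᵥ K.mulVec em) - dm ⬝ᵥ (Fmᵀ * Lᵀ * Fm).mulVec dm := by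
  have t1 : em ⬝ᵥ Fm.mulVec dm = dm ⬝ᵥ Fmᵀ.mulVec em := by
    rw [dotProduct_mulVec, dotProduct_comm, mulVec_transpose]
  have t2 : dm ⬝ᵥ (Fmᵀ * (L * Fm)).mulVec dm = dm ⬝ᵥ (Fmᵀ * Lᵀ * Fm).mulVec dm := by
    rw [dotProduct_mulVec, dotProduct_comm, ← mulVec_transpose]
    simp [Matrix.transpose_mul, Matrix.mul_assoc]
  simp only [mulVec_add, mulVec_neg, add_mulVec, neg_mulVec, one_mulVec, mulVec_mulVec,
    dotProduct_add, dotProduct_neg]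
  ring_nf
  rw [t1] at *
  linarith [t2]

private lemma euclid_inner_eq_dot {p : ℕ} (x y : EuclideanSpace ℝ (Fin p)) :
    ⟪x, y⟫_ℝ = (x : Fin p → ℝ) ⬝ᵥ (y : Fin p → ℝ) := by
  simp [PiLp.inner_apply, RCLike.inner_apply, dotProduct, mul_comm]

/-- Under the error dynamics `ė = -K e + F(t) Δ` and the adaptation law
`Δ̇ = -F(t)ᵀ[(LK + I) e + L ė]` for `t ≥ 0`, if `⟪v, K v⟫ ≥ k‖v‖²` and
`⟪w, F(t)ᵀ Lᵀ F(t) w⟫ ≥ μ‖w‖²` uniformly with `k, μ > 0`, then with `c = min k μ`,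
`‖e(t)‖² + ‖Δ(t)‖² ≤ (‖e(0)‖² + ‖Δ(0)‖²) exp(-2ct)` for all `t ≥ 0`; in particular
`e(t) → 0` and `Δ(t) → 0` as `t → ∞`. -/
theorem simultaneous_synchronization_and_identification {n m : ℕ}
    (K L : Matrix (Fin n) (Fin n) ℝ)
    (F : ℝ → Matrix (Fin n) (Fin m) ℝ)
    (e e' : ℝ → EuclideanSpace ℝ (Fin n))
    (Δ Δ' : ℝ → EuclideanSpace ℝ (Fin m))
    (he : ∀ t, HasDerivAt e (e' t) t)
    (hΔ : ∀ t, HasDerivAt Δ (Δ' t) t)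
    (hode : ∀ t, 0 ≤ t → e' t = -(K.mulVec (e t)) + (F t).mulVec (Δ t))
    (hadapt : ∀ t, 0 ≤ t → Δ' t =
      -((F t)ᵀ.mulVec ((L * K + 1).mulVec (e t) + L.mulVec (e' t))))
    (k μ : ℝ) (hk : 0 < k) (hμ : 0 < μ)
    (hK : ∀ v : EuclideanSpace ℝ (Fin n), k * ‖v‖ ^ 2 ≤ ⟪v, WithLp.toLp 2 (K.mulVec v)⟫_ℝ)
    (hG : ∀ t, 0 ≤ t → ∀ w : EuclideanSpace ℝ (Fin m),
      μ * ‖w‖ ^ 2 ≤ ⟪w, WithLp.toLp 2 (((F t)ᵀ * Lᵀ * F t).mulVec w)⟫_ℝ) :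
    (∀ t, 0 ≤ t → ‖e t‖ ^ 2 + ‖Δ t‖ ^ 2 ≤
      (‖e 0‖ ^ 2 + ‖Δ 0‖ ^ 2) * Real.exp (-2 * min k μ * t)) ∧
      Tendsto e atTop (nhds 0) ∧ Tendsto Δ atTop (nhds 0) := by
  set c := min k μ with hc
  have hcpos : 0 < c := lt_min hk hμ
  set V : ℝ → ℝ := fun t => ‖e t‖ ^ 2 + ‖Δ t‖ ^ 2 with hV
  set V' : ℝ → ℝ := fun t => (⟪e t, e' t⟫_ℝ + ⟪e' t, e t⟫_ℝ)
      + (⟪Δ t, Δ' t⟫_ℝ + ⟪Δ' t, Δ t⟫_ℝ) with hV'def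
  have hVderiv : ∀ t, HasDerivAt V (V' t) t := by
    intro t
    have h1 := ((he t).inner ℝ (he t)).add ((hΔ t).inner ℝ (hΔ t))
    have : V = fun t => ⟪e t, e t⟫_ℝ + ⟪Δ t, Δ t⟫_ℝ := by
      funext s
      rw [real_inner_self_eq_norm_sq, real_inner_self_eq_norm_sq]
    rw [this]
    exact h1
  -- key differential inequality
  have key : ∀ t, 0 ≤ t → V' t ≤ -2 * c * V t := by
    intro t ht
    have hsum : ⟪e t, e' t⟫_ℝ + ⟪Δ t, Δ' t⟫_ℝ
        = -(⟪e t, WithLp.toLp 2 (K.mulVec (e t))⟫_ℝ) - ⟪Δ t, WithLp.toLp 2 (((F t)ᵀ * Lᵀ * F t).mulVec (Δ t))⟫_ℝ := by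
      rw [euclid_inner_eq_dot, euclid_inner_eq_dot, euclid_inner_eq_dot, euclid_inner_eq_dot,
        hadapt t ht, hode t ht]
      exact mulVec_algebra K L (F t) (e t) (Δ t)
    have h2 := hK (e t)
    have h3 := hG t ht (Δ t)
    have hck : c ≤ k := min_le_left _ _
    have hcμ : c ≤ μ := min_le_right _ _
    have hne : (0:ℝ) ≤ ‖e t‖ ^ 2 := by positivity
    have hnd : (0:ℝ) ≤ ‖Δ t‖ ^ 2 := by positivity
    have : V' t = 2 * (⟪e t, e' t⟫_ℝ + ⟪Δ t, Δ' t⟫_ℝ) := by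
      simp only [hV'def]
      rw [real_inner_comm (e' t) (e t), real_inner_comm (Δ' t) (Δ t)]
      ring
    rw [this, hsum]
    simp only [hV]
    nlinarith [mul_le_mul_of_nonneg_right hck hne, mul_le_mul_of_nonneg_right hcμ hnd]
  -- Gronwall via monotonicity of g t = V t * exp (2 c t)
  set g : ℝ → ℝ := fun t => V t * Real.exp (2 * c * t) with hg
  have hgderiv : ∀ t, HasDerivAt g
      (V' t * Real.exp (2 * c * t) + V t * (2 * c * Real.exp (2 * c * t))) t := by
    intro t
    have hexp : HasDerivAt (fun t => Real.exp (2 * c * t)) (2 * c * Real.exp (2 * c * t)) t := by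
      have h := ((hasDerivAt_id t).const_mul (2 * c)).exp
      simp only [id_eq, mul_one] at h
      convert h using 1
      ring
    exact (hVderiv t).mul hexp
  have hanti : AntitoneOn g (Set.Ici 0) := by
    apply antitoneOn_of_deriv_nonpos (convex_Ici 0)
    · exact fun t _ => ((hgderiv t).continuousAt).continuousWithinAt
    · intro t _
      exact (hgderiv t).differentiableAt.differentiableWithinAt
    · intro t htint
      rw [interior_Ici] at htint
      have ht : 0 ≤ t := le_of_lt htint
      rw [(hgderiv t).deriv]
      have := key t ht
      have hexppos : 0 < Real.exp (2 * c * t) := Real.exp_pos _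
      nlinarith
  have hbound : ∀ t, 0 ≤ t → V t ≤ V 0 * Real.exp (-2 * c * t) := by
    intro t ht
    have := hanti (Set.self_mem_Ici) ht ht
    simp only [hg, mul_zero, Real.exp_zero, mul_one] at this
    have hexppos : 0 < Real.exp (2 * c * t) := Real.exp_pos _
    rw [show (-2 : ℝ) * c * t = -(2 * c * t) by ring, Real.exp_neg,
      show V 0 * (Real.exp (2 * c * t))⁻¹ = V 0 / Real.exp (2 * c * t) from
        (div_eq_mul_inv _ _).symm, le_div_iff₀ hexppos]
    linarith
  have hVtend : Tendsto (fun t => (‖e 0‖ ^ 2 + ‖Δ 0‖ ^ 2) * Real.exp (-2 * c * t))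
      atTop (nhds 0) := by
    have hexp0 : Tendsto (fun t : ℝ => Real.exp (-2 * c * t)) atTop (nhds 0) := by
      rw [Real.tendsto_exp_comp_nhds_zero]
      exact tendsto_id.const_mul_atTop_of_neg (by linarith)
    simpa using hexp0.const_mul (‖e 0‖ ^ 2 + ‖Δ 0‖ ^ 2)
  refine ⟨hbound, ?_, ?_⟩
  · -- e → 0
    have hetend : Tendsto (fun t => ‖e t‖ ^ 2) atTop (nhds 0) := by
      apply squeeze_zero' (Eventually.of_forall fun t => by positivity)
        ((eventually_ge_atTop 0).mono fun t ht => by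
          have := hbound t ht
          simp only [hV] at this
          nlinarith [sq_nonneg ‖Δ t‖]) hVtend
    have h2 : Tendsto (fun t => ‖e t‖) atTop (nhds 0) := by
      have h3 := (Real.continuous_sqrt.tendsto 0).comp hetend
      simp only [Real.sqrt_zero] at h3
      rwa [show ((fun x => Real.sqrt x) ∘ fun t => ‖e t‖ ^ 2) = fun t => ‖e t‖ from
        funext fun t => Real.sqrt_sq (norm_nonneg _)] at h3
    rw [tendsto_zero_iff_norm_tendsto_zero]
    exact h2
  · -- Δ → 0
    have hdtend : Tendsto (fun t => ‖Δ t‖ ^ 2) atTop (nhds 0) := by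
      apply squeeze_zero' (Eventually.of_forall fun t => by positivity)
        ((eventually_ge_atTop 0).mono fun t ht => by
          have := hbound t ht
          simp only [hV] at this
          nlinarith [sq_nonneg ‖e t‖]) hVtend
    have h2 : Tendsto (fun t => ‖Δ t‖) atTop (nhds 0) := by
      have h3 := (Real.continuous_sqrt.tendsto 0).comp hdtend
      simp only [Real.sqrt_zero] at h3
      rwa [show ((fun x => Real.sqrt x) ∘ fun t => ‖Δ t‖ ^ 2) = fun t => ‖Δ t‖ from
        funext fun t => Real.sqrt_sq (norm_nonneg _)] at h3
    rw [tendsto_zero_iff_norm_tendsto_zero]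
    exact h2
end

section
/- Let e : ℝ → ℝⁿ and Δ : ℝ → ℝᵐ be differentiable and F : ℝ → Matrix (Fin n) (Fin m) ℝ any function of time. Suppose for all t: ė(t) = −e(t) + F(t)·Δ(t) and Δ̇(t) = −F(t)ᵀ·e(t). Then V₁(t) = ½‖e(t)‖² + ½‖Δ(t)‖² is differentiable with V̇₁(t) = −‖e(t)‖² for all t. -/
open Matrix

lemma inner_sq_deriv {k : ℕ} (x x' : ℝ → EuclideanSpace ℝ (Fin k)) (t : ℝ)
    (h : HasDerivAt x (x' t) t) :
    HasDerivAt (fun s => (1 / 2 : ℝ) * ‖x s‖ ^ 2) (inner ℝ (x' t) (x t)) t := by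
  have h1 : HasDerivAt (fun s => (inner ℝ (x s) (x s) : ℝ))
      (inner ℝ (x t) (x' t) + inner ℝ (x' t) (x t)) t := h.inner ℝ h
  have h2 : HasDerivAt (fun s => (1 / 2 : ℝ) * (inner ℝ (x s) (x s) : ℝ))
      ((1 / 2 : ℝ) * (inner ℝ (x t) (x' t) + inner ℝ (x' t) (x t))) t := h1.const_mul _
  have : ((1 / 2 : ℝ) * (inner ℝ (x t) (x' t) + inner ℝ (x' t) (x t))) = inner ℝ (x' t) (x t) := by
    rw [real_inner_comm (x t) (x' t)]; ring
  rw [this] at h2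
  convert h2 using 2 with s
  rw [real_inner_self_eq_norm_sq]

/-- Under Chen's closed-loop dynamics `ė = -e + F(t) Δ` and
`Δ̇ = -F(t)ᵀ e`, the Lyapunov function `V₁(t) = ½‖e(t)‖² + ½‖Δ(t)‖²` is
differentiable with `V̇₁(t) = -‖e(t)‖²`. -/
theorem chen_lyapunov_derivative {n m : ℕ}
    (F : ℝ → Matrix (Fin n) (Fin m) ℝ)
    (e e' : ℝ → EuclideanSpace ℝ (Fin n))
    (Δ Δ' : ℝ → EuclideanSpace ℝ (Fin m))
    (he : ∀ t, HasDerivAt e (e' t) t)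
    (hΔ : ∀ t, HasDerivAt Δ (Δ' t) t)
    (hode : ∀ t, e' t = -e t + (show EuclideanSpace ℝ (Fin n) from WithLp.toLp 2 ((F t).mulVec (Δ t))))
    (hadapt : ∀ t, Δ' t = -((F t)ᵀ.mulVec (e t))) :
    ∀ t, HasDerivAt (fun s => (1 / 2 : ℝ) * ‖e s‖ ^ 2 + (1 / 2 : ℝ) * ‖Δ s‖ ^ 2)
      (-‖e t‖ ^ 2) t := by
  intro t
  have h1 := inner_sq_deriv e e' t (he t)
  have h2 := inner_sq_deriv Δ Δ' t (hΔ t)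
  have hsum := h1.add h2
  have key : (inner ℝ (e' t) (e t) : ℝ) + inner ℝ (Δ' t) (Δ t) = -‖e t‖ ^ 2 := by
    rw [hode t, show Δ' t = -(WithLp.toLp 2 ((F t)ᵀ *ᵥ (e t).ofLp) : EuclideanSpace ℝ (Fin m)) from
      (WithLp.toLp_ofLp (p := 2) (Δ' t)).symm.trans (by rw [hadapt t]; rfl)]
    rw [inner_add_left, inner_neg_left, inner_neg_left, real_inner_self_eq_norm_sq]
    have hc : (inner ℝ (show EuclideanSpace ℝ (Fin n) from WithLp.toLp 2 ((F t).mulVec (Δ t))) (e t) : ℝ)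
        = inner ℝ (show EuclideanSpace ℝ (Fin m) from WithLp.toLp 2 ((F t)ᵀ.mulVec (e t))) (Δ t) := by
      simp only [PiLp.inner_apply, RCLike.inner_apply, conj_trivial, PiLp.toLp_apply]
      have : ∑ i, e t i * (F t).mulVec (Δ t) i = (e t) ⬝ᵥ ((F t).mulVec (Δ t)) := rfl
      rw [this]
      have : ∑ i, Δ t i * (F t)ᵀ.mulVec (e t) i = (Δ t) ⬝ᵥ ((F t)ᵀ.mulVec (e t)) := rfl
      rw [this, Matrix.dotProduct_mulVec, Matrix.mulVec_transpose, dotProduct_comm]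
      
    rw [hc]; ring
  rw [key] at hsum
  exact hsum
end

section
/- Let e : ℝ → ℝⁿ and Δ : ℝ → ℝᵐ be differentiable and F : ℝ → Matrix (Fin n) (Fin m) ℝ any continuous function of time, with ė(t) = −e(t) + F(t)·Δ(t) and Δ̇(t) = −F(t)ᵀ·e(t) for all t ≥ 0. Then for all 0 ≤ s ≤ t: (i) ½‖e(t)‖² + ½‖Δ(t)‖² ≤ ½‖e(s)‖² + ½‖Δ(s)‖², and (ii) ∫₀ᵀ ‖e(t)‖² dt ≤ ½‖e(0)‖² + ½‖Δ(0)‖² for every T ≥ 0. -/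
open Matrix

lemma chen_inner_swap {n m : ℕ} (M : Matrix (Fin n) (Fin m) ℝ)
    (x : EuclideanSpace ℝ (Fin n)) (y : EuclideanSpace ℝ (Fin m)) :
    @inner ℝ _ _ (show EuclideanSpace ℝ (Fin n) from WithLp.toLp 2 (M.mulVec y)) x
      = @inner ℝ _ _ (show EuclideanSpace ℝ (Fin m) from WithLp.toLp 2 (Mᵀ.mulVec x)) y := by
  simp only [PiLp.inner_apply, RCLike.inner_apply, starRingEnd_apply, star_trivial,
    Matrix.mulVec, dotProduct, Matrix.transpose_apply, Finset.sum_mul, Finset.mul_sum]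
  rw [Finset.sum_comm]
  exact Finset.sum_congr rfl fun i _ => Finset.sum_congr rfl fun j _ => by ring

/-- Under Chen's closed-loop dynamics `ė = -e + F(t) Δ`,
`Δ̇ = -F(t)ᵀ e` for `t ≥ 0` (with `F` continuous), the Lyapunov function
`V₁ = ½‖e‖² + ½‖Δ‖²` is non-increasing on `[0, ∞)`, and
`∫₀ᵀ ‖e(t)‖² dt ≤ ½‖e(0)‖² + ½‖Δ(0)‖²` for every `T ≥ 0`. -/
theorem chen_stability {n m : ℕ}
    (F : ℝ → Matrix (Fin n) (Fin m) ℝ) (hF : Continuous F)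
    (e e' : ℝ → EuclideanSpace ℝ (Fin n))
    (Δ Δ' : ℝ → EuclideanSpace ℝ (Fin m))
    (he : ∀ t, HasDerivAt e (e' t) t)
    (hΔ : ∀ t, HasDerivAt Δ (Δ' t) t)
    (hode : ∀ t, 0 ≤ t →
      e' t = -e t + (show EuclideanSpace ℝ (Fin n) from WithLp.toLp 2 ((F t).mulVec (Δ t))))
    (hadapt : ∀ t, 0 ≤ t → Δ' t = -((F t)ᵀ.mulVec (e t))) :
    (∀ s t, 0 ≤ s → s ≤ t →
      (1 / 2 : ℝ) * ‖e t‖ ^ 2 + (1 / 2 : ℝ) * ‖Δ t‖ ^ 2 ≤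
        (1 / 2 : ℝ) * ‖e s‖ ^ 2 + (1 / 2 : ℝ) * ‖Δ s‖ ^ 2) ∧
    (∀ T, 0 ≤ T →
      (∫ t in (0 : ℝ)..T, ‖e t‖ ^ 2) ≤
        (1 / 2 : ℝ) * ‖e 0‖ ^ 2 + (1 / 2 : ℝ) * ‖Δ 0‖ ^ 2) := by
  have heC : Continuous e := continuous_iff_continuousAt.mpr fun t => (he t).continuousAt
  set V : ℝ → ℝ := fun t => (1 / 2 : ℝ) * ‖e t‖ ^ 2 + (1 / 2 : ℝ) * ‖Δ t‖ ^ 2 with hVdef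
  -- derivative of V on [0, ∞)
  have hVderiv : ∀ t, 0 ≤ t → HasDerivAt V (-(‖e t‖ ^ 2)) t := by
    intro t ht
    have h1 : HasDerivAt (fun u => @inner ℝ _ _ (e u) (e u))
        (@inner ℝ _ _ (e t) (e' t) + @inner ℝ _ _ (e' t) (e t)) t :=
      (he t).inner ℝ (he t)
    have h2 : HasDerivAt (fun u => @inner ℝ _ _ (Δ u) (Δ u))
        (@inner ℝ _ _ (Δ t) (Δ' t) + @inner ℝ _ _ (Δ' t) (Δ t)) t :=
      (hΔ t).inner ℝ (hΔ t)
    have hVeq : V = fun u => (1 / 2 : ℝ) * @inner ℝ _ _ (e u) (e u)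
        + (1 / 2 : ℝ) * @inner ℝ _ _ (Δ u) (Δ u) := by
      funext u
      simp only [hVdef, real_inner_self_eq_norm_sq]
    rw [hVeq]
    have := ((h1.const_mul ((1:ℝ)/2)).add (h2.const_mul ((1:ℝ)/2)))
    refine this.congr_deriv ?_
    have hadapt' : Δ' t = -(WithLp.toLp 2 ((F t)ᵀ.mulVec (e t))) := by
      ext i; simp [hadapt t ht]
    rw [hode t ht, hadapt']
    have hswap := chen_inner_swap (F t) (e t) (Δ t)
    have hsym : @inner ℝ _ _ (e t) (show EuclideanSpace ℝ (Fin n) from WithLp.toLp 2 ((F t).mulVec (Δ t)))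
        = @inner ℝ _ _ (show EuclideanSpace ℝ (Fin n) from WithLp.toLp 2 ((F t).mulVec (Δ t))) (e t) :=
      real_inner_comm _ _
    have hsym2 : @inner ℝ _ _ (Δ t) (show EuclideanSpace ℝ (Fin m) from WithLp.toLp 2 ((F t)ᵀ.mulVec (e t)))
        = @inner ℝ _ _ (show EuclideanSpace ℝ (Fin m) from WithLp.toLp 2 ((F t)ᵀ.mulVec (e t))) (Δ t) :=
      real_inner_comm _ _
    simp only [inner_add_left, inner_add_right, inner_neg_left, inner_neg_right,
      real_inner_self_eq_norm_sq]
    rw [hsym, hsym2, hswap]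
    ring
  -- the combined function
  have hf2C : Continuous fun u => ‖e u‖ ^ 2 := (heC.norm).pow 2
  set G : ℝ → ℝ := fun t => V t + ∫ s in (0:ℝ)..t, ‖e s‖ ^ 2 with hGdef
  have hInt : ∀ a b : ℝ, IntervalIntegrable (fun u => ‖e u‖ ^ 2) MeasureTheory.volume a b :=
    fun a b => hf2C.intervalIntegrable a b
  have hGderiv : ∀ t, 0 ≤ t → HasDerivAt G 0 t := by
    intro t ht
    have hI : HasDerivAt (fun u => ∫ s in (0:ℝ)..u, ‖e s‖ ^ 2) (‖e t‖ ^ 2) t :=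
      intervalIntegral.integral_hasDerivAt_right (hInt 0 t)
        (hf2C.stronglyMeasurableAtFilter _ _) hf2C.continuousAt
    have := (hVderiv t ht).add hI
    exact this.congr_deriv (by ring)
  have hGcont : Continuous G := by
    have hVc : Continuous V := by
      have hΔC : Continuous Δ := continuous_iff_continuousAt.mpr fun t => (hΔ t).continuousAt
      fun_prop
    exact hVc.add (intervalIntegral.continuous_primitive hInt 0)
  have hGconst : ∀ t, 0 ≤ t → G t = G 0 := by
    intro t ht
    have := constant_of_has_deriv_right_zero (f := G) (a := 0) (b := t)
      (hGcont.continuousOn)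
      (fun x hx => ((hGderiv x hx.1).hasDerivWithinAt))
    exact this t ⟨ht, le_refl t⟩
  have hVnonneg : ∀ t, 0 ≤ V t := by
    intro t
    have : (0:ℝ) ≤ ‖e t‖ ^ 2 := sq_nonneg _
    have : (0:ℝ) ≤ ‖Δ t‖ ^ 2 := sq_nonneg _
    positivity
  constructor
  · intro s t hs hst
    have ht : (0:ℝ) ≤ t := le_trans hs hst
    have h1 : G t = G s := by rw [hGconst t ht, hGconst s hs]
    have hsplit : (∫ u in (0:ℝ)..t, ‖e u‖ ^ 2)
        = (∫ u in (0:ℝ)..s, ‖e u‖ ^ 2) + ∫ u in s..t, ‖e u‖ ^ 2 :=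
      (intervalIntegral.integral_add_adjacent_intervals (hInt 0 s) (hInt s t)).symm
    have hpos : (0:ℝ) ≤ ∫ u in s..t, ‖e u‖ ^ 2 :=
      intervalIntegral.integral_nonneg hst (fun u _ => sq_nonneg _)
    have : V t + ((∫ u in (0:ℝ)..s, ‖e u‖ ^ 2) + ∫ u in s..t, ‖e u‖ ^ 2)
        = V s + ∫ u in (0:ℝ)..s, ‖e u‖ ^ 2 := by
      rw [← hsplit]; exact h1
    have hfin : V t + ∫ u in s..t, ‖e u‖ ^ 2 = V s := by linarith
    simp only [hVdef] at hfin
    linarith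
  · intro T hT
    have h1 : G T = G 0 := hGconst T hT
    have h0 : G 0 = V 0 := by simp [hGdef]
    have : V T + ∫ u in (0:ℝ)..T, ‖e u‖ ^ 2 = V 0 := by
      rw [← h0]; exact h1
    have h2 := hVnonneg T
    simp only [hVdef] at this h2
    linarith
end

section
/- Let K, L be n×n real matrices with I the n×n identity. For i = 0,…,r let eᵢ : ℝ → ℝⁿ be differentiable and Fᵢ : ℝ → Matrix (Fin n) (Fin m) ℝ, and let Δ : ℝ → ℝᵐ be differentiable, satisfying for all t ≥ 0: ėᵢ(t) = −K·eᵢ(t) + Fᵢ(t)·Δ(t) for every i, and Δ̇(t) = −Σ_{i=0}^{r} Fᵢ(t)ᵀ·[(L·K + I)·eᵢ(t) + L·ėᵢ(t)]. Assume there exist k > 0 and μ > 0 with ⟨v, K·v⟩ ≥ k‖v‖² for all v ∈ ℝⁿ and ⟨w, (Σ_{i=0}^{r} Fᵢ(t)ᵀ·Lᵀ·Fᵢ(t))·w⟩ ≥ μ‖w‖² for all w ∈ ℝᵐ and t ≥ 0. Then, with c = min(k, μ), Σ_{i=0}^{r} ‖eᵢ(t)‖² + ‖Δ(t)‖² ≤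 (Σ_{i=0}^{r} ‖eᵢ(0)‖² + ‖Δ(0)‖²)·exp(−2ct) for all t ≥ 0; in particular every eᵢ(t) → 0 and Δ(t) → 0 as t → ∞. -/
open Matrix Filter
open scoped InnerProductSpace

private lemma inner_eq_dot' {N : ℕ} (v w : EuclideanSpace ℝ (Fin N)) :
    ⟪v, w⟫_ℝ = v ⬝ᵥ w := by
  simp [PiLp.inner_apply, dotProduct, mul_comm]

private lemma trans_dot {N M : ℕ} (A : Matrix (Fin N) (Fin M) ℝ)
    (v : Fin N → ℝ) (w : Fin M → ℝ) : w ⬝ᵥ (Aᵀ *ᵥ v) = (A *ᵥ w) ⬝ᵥ v := by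
  rw [Matrix.dotProduct_mulVec, Matrix.vecMul_transpose]

private lemma transL_dot {N : ℕ} (A : Matrix (Fin N) (Fin N) ℝ)
    (v : Fin N → ℝ) : v ⬝ᵥ (Aᵀ *ᵥ v) = v ⬝ᵥ (A *ᵥ v) := by
  rw [Matrix.dotProduct_mulVec, Matrix.vecMul_transpose, dotProduct_comm]


private lemma dot_sum' {N M : ℕ} (u : Fin N → ℝ) (f : Fin M → Fin N → ℝ) :
    u ⬝ᵥ (∑ i : Fin M, f i) = ∑ i : Fin M, u ⬝ᵥ f i := by
  simp [dotProduct, Finset.mul_sum]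
  rw [Finset.sum_comm]

private lemma sum_mulVec' {N M I : ℕ} (A : Fin I → Matrix (Fin N) (Fin M) ℝ)
    (v : Fin M → ℝ) : (∑ i : Fin I, A i) *ᵥ v = ∑ i : Fin I, (A i *ᵥ v) := by
  ext j
  simp [Matrix.mulVec, dotProduct, Matrix.sum_apply, Finset.sum_mul]
  rw [Finset.sum_comm]

/-- Corollary 1: Under the augmented error dynamics
`ėᵢ = -K eᵢ + Fᵢ(t) Δ` and the augmented adaptation law
`Δ̇ = -Σᵢ Fᵢ(t)ᵀ[(LK + I) eᵢ + L ėᵢ]` for `t ≥ 0`, if `⟪v, K v⟫ ≥ k‖v‖²` and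
`⟪w, (Σᵢ Fᵢ(t)ᵀ Lᵀ Fᵢ(t)) w⟫ ≥ μ‖w‖²` uniformly with `k, μ > 0`, then with
`c = min k μ`, `Σᵢ ‖eᵢ(t)‖² + ‖Δ(t)‖² ≤ (Σᵢ ‖eᵢ(0)‖² + ‖Δ(0)‖²) exp(-2ct)` for all
`t ≥ 0`; in particular every `eᵢ(t) → 0` and `Δ(t) → 0` as `t → ∞`. -/
theorem augmented_convergence {n m r : ℕ}
    (K L : Matrix (Fin n) (Fin n) ℝ)
    (F : Fin (r + 1) → ℝ → Matrix (Fin n) (Fin m) ℝ)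
    (e e' : Fin (r + 1) → ℝ → EuclideanSpace ℝ (Fin n))
    (Δ Δ' : ℝ → EuclideanSpace ℝ (Fin m))
    (he : ∀ i t, HasDerivAt (e i) (e' i t) t)
    (hΔ : ∀ t, HasDerivAt Δ (Δ' t) t)
    (hode : ∀ i t, 0 ≤ t → e' i t = -(K.mulVec (e i t)) + (F i t).mulVec (Δ t))
    (hadapt : ∀ t, 0 ≤ t → Δ' t =
      -(∑ i : Fin (r + 1),
        (F i t)ᵀ.mulVec ((L * K + 1).mulVec (e i t) + L.mulVec (e' i t))))
    (k μ : ℝ) (hk : 0 < k) (hμ : 0 < μ)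
    (hK : ∀ v : EuclideanSpace ℝ (Fin n), k * ‖v‖ ^ 2 ≤ ⟪v, WithLp.toLp 2 (K.mulVec v)⟫_ℝ)
    (hG : ∀ t, 0 ≤ t → ∀ w : EuclideanSpace ℝ (Fin m),
      μ * ‖w‖ ^ 2 ≤ ⟪w, WithLp.toLp 2 ((∑ i : Fin (r + 1), (F i t)ᵀ * Lᵀ * F i t).mulVec w)⟫_ℝ) :
    (∀ t, 0 ≤ t →
      (∑ i : Fin (r + 1), ‖e i t‖ ^ 2) + ‖Δ t‖ ^ 2 ≤
        ((∑ i : Fin (r + 1), ‖e i 0‖ ^ 2) + ‖Δ 0‖ ^ 2) *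
          Real.exp (-2 * min k μ * t)) ∧
    (∀ i, Tendsto (e i) atTop (nhds 0)) ∧ Tendsto Δ atTop (nhds 0) := by
  set c := min k μ with hc_def
  have hc : 0 < c := lt_min hk hμ
  set V : ℝ → ℝ := fun t => (∑ i : Fin (r + 1), ‖e i t‖ ^ 2) + ‖Δ t‖ ^ 2 with hV_def
  set V' : ℝ → ℝ := fun t =>
    (∑ i : Fin (r + 1), 2 * ⟪e i t, e' i t⟫_ℝ) + 2 * ⟪Δ t, Δ' t⟫_ℝ with hV'_def
  -- V is differentiable with derivative V'
  have hVd : ∀ t, HasDerivAt V (V' t) t := by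
    intro t
    have h1 : ∀ i : Fin (r + 1),
        HasDerivAt (fun s => ‖e i s‖ ^ 2) (2 * ⟪e i t, e' i t⟫_ℝ) t := by
      intro i
      have h := (he i t).inner ℝ (he i t)
      have heq : (fun s => ⟪e i s, e i s⟫_ℝ) = fun s => ‖e i s‖ ^ 2 := by
        funext s; rw [real_inner_self_eq_norm_sq]
      rw [heq] at h
      rw [real_inner_comm (e i t) (e' i t), ← two_mul] at h; exact h
    have h2 : HasDerivAt (fun s => ‖Δ s‖ ^ 2) (2 * ⟪Δ t, Δ' t⟫_ℝ) t := by
      have h := (hΔ t).inner ℝ (hΔ t)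
      have heq : (fun s => ⟪Δ s, Δ s⟫_ℝ) = fun s => ‖Δ s‖ ^ 2 := by
        funext s; rw [real_inner_self_eq_norm_sq]
      rw [heq] at h
      rw [real_inner_comm (Δ t) (Δ' t), ← two_mul] at h; exact h
    exact (HasDerivAt.fun_sum (fun i _ => h1 i)).add h2
  -- key dissipation inequality
  have hkey : ∀ t, 0 ≤ t → V' t ≤ -(2 * c) * V t := by
    intro t ht
    have expand : ∀ i : Fin (r + 1), ⟪e i t, e' i t⟫_ℝ
        = -(e i t ⬝ᵥ (K *ᵥ e i t)) + (F i t *ᵥ Δ t) ⬝ᵥ e i t := by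
      intro i
      rw [inner_eq_dot', hode i t ht, dotProduct_add, dotProduct_neg,
        dotProduct_comm (e i t) (F i t *ᵥ Δ t)]
    have expandΔ : ⟪Δ t, Δ' t⟫_ℝ
        = -∑ i : Fin (r + 1), ((F i t *ᵥ Δ t) ⬝ᵥ e i t
            + (F i t *ᵥ Δ t) ⬝ᵥ (L *ᵥ (F i t *ᵥ Δ t))) := by
      rw [inner_eq_dot', hadapt t ht, dotProduct_neg, dot_sum']
      congr 1
      refine Finset.sum_congr rfl fun i _ => ?_
      rw [trans_dot, hode i t ht]
      simp only [Matrix.add_mulVec, Matrix.one_mulVec, Matrix.mulVec_add,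
        Matrix.mulVec_neg, ← Matrix.mulVec_mulVec, dotProduct_add,
        dotProduct_neg]
      ring
    have expandG : ⟪Δ t, WithLp.toLp 2 ((∑ i : Fin (r + 1), (F i t)ᵀ * Lᵀ * F i t) *ᵥ Δ t)⟫_ℝ
        = ∑ i : Fin (r + 1), (F i t *ᵥ Δ t) ⬝ᵥ (L *ᵥ (F i t *ᵥ Δ t)) := by
      rw [inner_eq_dot', WithLp.ofLp_toLp, sum_mulVec', dot_sum']
      refine Finset.sum_congr rfl fun i _ => ?_
      rw [← Matrix.mulVec_mulVec, ← Matrix.mulVec_mulVec, trans_dot, transL_dot]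
    have hS : (∑ i : Fin (r + 1), ⟪e i t, e' i t⟫_ℝ) + ⟪Δ t, Δ' t⟫_ℝ
        = -(∑ i : Fin (r + 1), ⟪e i t, WithLp.toLp 2 (K *ᵥ e i t)⟫_ℝ)
          - ⟪Δ t, WithLp.toLp 2 ((∑ i : Fin (r + 1), (F i t)ᵀ * Lᵀ * F i t) *ᵥ Δ t)⟫_ℝ := by
      rw [expandΔ, expandG]
      simp only [expand, inner_eq_dot', WithLp.ofLp_toLp]
      rw [Finset.sum_add_distrib, Finset.sum_add_distrib, ← Finset.sum_neg_distrib]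
      ring
    have hsum1 : ∀ i : Fin (r + 1), k * ‖e i t‖ ^ 2
        ≤ ⟪e i t, WithLp.toLp 2 (K *ᵥ e i t)⟫_ℝ := fun i => hK (e i t)
    have hsum2 := hG t ht (Δ t)
    have hks : k * (∑ i : Fin (r + 1), ‖e i t‖ ^ 2)
        ≤ ∑ i : Fin (r + 1), ⟪e i t, WithLp.toLp 2 (K *ᵥ e i t)⟫_ℝ := by
      rw [Finset.mul_sum]
      exact Finset.sum_le_sum fun i _ => hsum1 i
    have hnn1 : 0 ≤ ∑ i : Fin (r + 1), ‖e i t‖ ^ 2 :=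
      Finset.sum_nonneg fun i _ => sq_nonneg _
    have hnn2 : 0 ≤ ‖Δ t‖ ^ 2 := sq_nonneg _
    have hck : c ≤ k := min_le_left _ _
    have hcμ : c ≤ μ := min_le_right _ _
    have hV'eq : V' t = 2 * ((∑ i : Fin (r + 1), ⟪e i t, e' i t⟫_ℝ) + ⟪Δ t, Δ' t⟫_ℝ) := by
      simp only [hV'_def]
      rw [← Finset.mul_sum]; ring
    rw [hV'eq, hS]
    simp only [hV_def]
    nlinarith [hks, hsum2, hnn1, hnn2]
  -- Gronwall via monotonicity of W t = V t * exp (2 c t)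
  set W : ℝ → ℝ := fun t => V t * Real.exp (2 * c * t) with hW_def
  have hWd : ∀ t, HasDerivAt W
      (V' t * Real.exp (2 * c * t) + V t * (Real.exp (2 * c * t) * (2 * c))) t := by
    intro t
    have hexp : HasDerivAt (fun s => Real.exp (2 * c * s))
        (Real.exp (2 * c * t) * (2 * c)) t := by
      have h1 : HasDerivAt (fun s : ℝ => 2 * c * s) (2 * c) t := by
        simpa using (hasDerivAt_id t).const_mul (2 * c)
      exact h1.exp
    exact (hVd t).mul hexp
  have hanti : AntitoneOn W (Set.Ici (0 : ℝ)) := by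
    apply antitoneOn_of_deriv_nonpos (convex_Ici 0)
    · exact fun x _ => ((hWd x).continuousAt).continuousWithinAt
    · intro x hx
      exact ((hWd x).differentiableAt).differentiableWithinAt
    · intro x hx
      rw [interior_Ici] at hx
      rw [(hWd x).deriv]
      have hx0 : (0 : ℝ) ≤ x := le_of_lt hx
      have := hkey x hx0
      have hE : 0 < Real.exp (2 * c * x) := Real.exp_pos _
      nlinarith [this, hE]
  have hbound : ∀ t, 0 ≤ t → V t ≤ V 0 * Real.exp (-2 * c * t) := by
    intro t ht
    have h := hanti (Set.self_mem_Ici) (Set.mem_Ici.mpr ht) ht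
    simp only [hW_def] at h
    rw [mul_zero, Real.exp_zero, mul_one] at h
    have hE : 0 < Real.exp (2 * c * t) := Real.exp_pos _
    have : V t ≤ V 0 / Real.exp (2 * c * t) := (le_div_iff₀ hE).mpr h
    calc V t ≤ V 0 / Real.exp (2 * c * t) := this
      _ = V 0 * Real.exp (-2 * c * t) := by
          rw [div_eq_mul_inv, ← Real.exp_neg]; ring_nf
  refine ⟨hbound, ?_, ?_⟩
  -- convergence of V to 0
  all_goals {
    have hVto0 : Tendsto V atTop (nhds 0) := by
      have hlim : Tendsto (fun t => V 0 * Real.exp (-2 * c * t)) atTop (nhds 0) := by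
        have h1 : Tendsto (fun t : ℝ => 2 * c * t) atTop atTop :=
          Tendsto.const_mul_atTop (by positivity) tendsto_id
        have h2 : Tendsto (fun t : ℝ => Real.exp (-(2 * c * t))) atTop (nhds 0) :=
          Real.tendsto_exp_neg_atTop_nhds_zero.comp h1
        have h3 : Tendsto (fun t : ℝ => V 0 * Real.exp (-(2 * c * t))) atTop (nhds 0) := by
          simpa using h2.const_mul (V 0)
        convert h3 using 2 with t
        ring_nf
      have hnn : ∀ t, 0 ≤ V t := fun t =>
        add_nonneg (Finset.sum_nonneg fun i _ => sq_nonneg _) (sq_nonneg _)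
      have hev : ∀ᶠ t in atTop, V t ≤ V 0 * Real.exp (-2 * c * t) :=
        eventually_atTop.mpr ⟨0, fun t ht => hbound t ht⟩
      exact squeeze_zero' (Eventually.of_forall hnn) hev hlim
    first
    | { intro i
        have hsq : Tendsto (fun t => ‖e i t‖ ^ 2) atTop (nhds 0) := by
          apply squeeze_zero (fun t => sq_nonneg _) (fun t => ?_) hVto0
          have : ‖e i t‖ ^ 2 ≤ ∑ j : Fin (r + 1), ‖e j t‖ ^ 2 :=
            Finset.single_le_sum (f := fun j => ‖e j t‖ ^ 2)
              (fun j _ => sq_nonneg _) (Finset.mem_univ i)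
          simp only [hV_def]
          nlinarith [sq_nonneg ‖Δ t‖]
        rw [tendsto_zero_iff_norm_tendsto_zero]
        have := hsq.sqrt
        simpa [Real.sqrt_sq (norm_nonneg _)] using this }
    | { have hsq : Tendsto (fun t => ‖Δ t‖ ^ 2) atTop (nhds 0) := by
          apply squeeze_zero (fun t => sq_nonneg _) (fun t => ?_) hVto0
          simp only [hV_def]
          nlinarith [Finset.sum_nonneg (fun i (_ : i ∈ Finset.univ) =>
            sq_nonneg ‖e i t‖)]
        rw [tendsto_zero_iff_norm_tendsto_zero]
        have := hsq.sqrt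
        simpa [Real.sqrt_sq (norm_nonneg _)] using this }
  }
end
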